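/- Let T = (V, A) be a polytree and let I⁰, Iᵗ be independent sets in T with |I⁰| = |Iᵗ|. If I⁰ is reconfigurable into Iᵗ under directed token sliding, then every reconfiguration sequence from I⁰ to Iᵗ has the same length, namely the sum over all arcs e ∈ A of w(e; I⁰, Iᵗ) = |C⁻_e ∩ I⁰| − |C⁻_e ∩ Iᵗ|. -/

import Mathlib

open scoped Classical

variable {V : Type*}

/-- The underlying undirected simple graph of a digraph given by its arc relation. -/
def underlying (A : V → V → Prop) : SimpleGraph V := SimpleGraph.fromRel A

/-- A polytree: a loopless digraph without antiparallel arcs whose underlying graph is a tree. -/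
def IsPolytree (A : V → V → Prop) : Prop :=
  (∀ v, ¬ A v v) ∧ (∀ u v, A u v → ¬ A v u) ∧ (underlying A).IsTree

/-- `x` lies in the weakly connected component of `T - (a,b)` containing the tail `a`. -/
def InCminus (A : V → V → Prop) (a b x : V) : Prop :=
  ((underlying A).deleteEdges {s(a, b)}).Reachable a x

/-- `w((a,b); X, Y) = |C⁻ ∩ X| - |C⁻ ∩ Y|`. -/
noncomputable def wArc [Fintype V] [DecidableEq V] (A : V → V → Prop)
    (X Y : Finset V) (a b : V) : ℤ :=
  ((X.filter fun x => InCminus A a b x).card : ℤ) -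
    ((Y.filter fun x => InCminus A a b x).card : ℤ)

/-- Independence in the underlying undirected graph. -/
def IndepF (A : V → V → Prop) (I : Finset V) : Prop :=
  ∀ u ∈ I, ∀ v ∈ I, ¬ (underlying A).Adj u v

/-- One token-sliding step along an arc, in its direction. -/
def IsStep [DecidableEq V] (A : V → V → Prop) (I J : Finset V) : Prop :=
  ∃ u v, A u v ∧ I \ J = {u} ∧ J \ I = {v}

/-- A reconfiguration sequence of independent sets under directed token sliding. -/
def IsReconfSeq [DecidableEq V] (A : V → V → Prop) {ℓ : ℕ}
    (f : Fin (ℓ + 1) → Finset V) : Prop :=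
  (∀ i, IndepF A (f i)) ∧ ∀ i : Fin ℓ, IsStep A (f i.castSucc) (f i.succ)

/-- `I` is reconfigurable into `J` under directed token sliding. -/
def Reconfigurable [DecidableEq V] (A : V → V → Prop) (I J : Finset V) : Prop :=
  ∃ (ℓ : ℕ) (f : Fin (ℓ + 1) → Finset V),
    IsReconfSeq A f ∧ f 0 = I ∧ f (Fin.last ℓ) = J

/-- A directed path in the digraph `A`, given by its (distinct) vertices in order. -/
structure DirPath (A : V → V → Prop) where
  len : ℕ
  vtx : Fin (len + 1) → V
  inj : Function.Injective vtx
  arc : ∀ i : Fin len, A (vtx i.castSucc) (vtx i.succ)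

namespace DirPath
variable {A : V → V → Prop}
/-- The source of a directed path. -/
def src (p : DirPath A) : V := p.vtx 0
/-- The sink of a directed path. -/
def snk (p : DirPath A) : V := p.vtx (Fin.last p.len)
/-- The second vertex `s'(P)` of a directed path. -/
def sndVtx (p : DirPath A) : V := p.vtx ⟨min 1 p.len, by omega⟩
/-- The second-to-last vertex `t'(P)` of a directed path. -/
def penVtx (p : DirPath A) : V := p.vtx ⟨p.len - 1, by omega⟩
/-- `v` is a vertex of the path `p`. -/
def mem (p : DirPath A) (v : V) : Prop := ∃ i, p.vtx i = v
/-- `x` is an internal vertex of `p` (neither source nor sink). -/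
def internal (p : DirPath A) (x : V) : Prop :=
  ∃ i : Fin (p.len + 1), p.vtx i = x ∧ i ≠ 0 ∧ i ≠ Fin.last p.len
end DirPath

/-- A directed path matching from `X` to `Y`: distinct sources forming `X`,
distinct sinks forming `Y`. -/
def IsDPM [DecidableEq V] {A : V → V → Prop} {k : ℕ}
    (X Y : Finset V) (P : Fin k → DirPath A) : Prop :=
  (Function.Injective fun i => (P i).src) ∧ (Function.Injective fun i => (P i).snk) ∧
  (Finset.univ.image fun i => (P i).src) = X ∧ (Finset.univ.image fun i => (P i).snk) = Y

/-- The path-set conditions (P1)–(P4). -/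
def PathSetConds [DecidableEq V] {A : V → V → Prop} {k : ℕ}
    (X Y : Finset V) (P : Fin k → DirPath A) : Prop :=
  (∀ i, 2 ≤ (P i).len) ∧ IsDPM X Y P ∧
  (∀ i j, i ≠ j → (P i).sndVtx ≠ (P j).sndVtx) ∧
  (∀ i j, i ≠ j → (P i).penVtx ≠ (P j).penVtx)

/-- Length of the (unique, when it exists) directed path from `u` to `v`. -/
noncomputable def ddist (A : V → V → Prop) (u v : V) : ℕ :=
  sInf {n | ∃ p : DirPath A, p.src = u ∧ p.snk = v ∧ p.len = n}

/-- A biased path pair: a common internal vertex `x` with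
`dist(s(p),x) > dist(s(q),x)` and `dist(x,t(p)) > dist(x,t(q))`. -/
def BiasedPair (A : V → V → Prop) (p q : DirPath A) : Prop :=
  ∃ x, p.internal x ∧ q.internal x ∧
    ddist A q.src x < ddist A p.src x ∧ ddist A x q.snk < ddist A x p.snk

/-- A rigid token: `v ∈ X ∩ Y` and all incident arcs have `w`-value `0`. -/
def RigidTok [Fintype V] [DecidableEq V] (A : V → V → Prop) (X Y : Finset V) (v : V) : Prop :=
  v ∈ X ∧ v ∈ Y ∧ ∀ a b, A a b → (a = v ∨ b = v) → wArc A X Y a b = 0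

/-- A blocking arc: `w((u,v)) = 1` and every other arc incident to `u` or `v`
has `w`-value `0`. -/
def BlockingArc [Fintype V] [DecidableEq V] (A : V → V → Prop) (X Y : Finset V)
    (u v : V) : Prop :=
  A u v ∧ wArc A X Y u v = 1 ∧
    ∀ a b, A a b → (a, b) ≠ (u, v) → (a = u ∨ b = u ∨ a = v ∨ b = v) →
      wArc A X Y a b = 0

/-- A trajectory of a single token along a reconfiguration sequence. -/
def IsTrajectory [DecidableEq V] (A : V → V → Prop) {ℓ : ℕ}
    (f : Fin (ℓ + 1) → Finset V) (g : Fin (ℓ + 1) → V) : Prop :=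
  (∀ i, g i ∈ f i) ∧ ∀ i : Fin ℓ,
    g i.succ = g i.castSucc ∨
      (f i.castSucc \ f i.succ = {g i.castSucc} ∧ f i.succ \ f i.castSucc = {g i.succ})

/-- Number of steps of a reconfiguration sequence sliding a token from `u` to `v`. -/
noncomputable def movesAlong [DecidableEq V] {ℓ : ℕ} (f : Fin (ℓ + 1) → Finset V)
    (u v : V) : ℕ :=
  (Finset.univ.filter fun i : Fin ℓ =>
    f i.castSucc \ f i.succ = {u} ∧ f i.succ \ f i.castSucc = {v}).card

/-- Number of forward arc traversals of a walk with vertex list `l`. -/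
noncomputable def fwdCount (A : V → V → Prop) (l : List V) : ℕ :=
  (l.zip l.tail).countP fun p => decide (A p.1 p.2)

/-- Number of reverse arc traversals of a walk with vertex list `l`. -/
noncomputable def revCount (A : V → V → Prop) (l : List V) : ℕ :=
  (l.zip l.tail).countP fun p => decide (A p.2 p.1)

/-- Number of traversals of the ordered pair `(a, b)` by a walk with vertex list `l`. -/
def traverseCount [DecidableEq V] (l : List V) (a b : V) : ℕ :=
  (l.zip l.tail).count (a, b)

/-- A vertex `v` touches a directed path `p` if `N[v]` meets the vertex set of `p`. -/
def Touches (A : V → V → Prop) (v : V) (p : DirPath A) : Prop :=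
  ∃ u, p.mem u ∧ (u = v ∨ (underlying A).Adj v u)

/-- Independence in an undirected graph (for undirected token sliding). -/
def UIndep (G : SimpleGraph V) (I : Finset V) : Prop :=
  ∀ u ∈ I, ∀ v ∈ I, ¬ G.Adj u v

/-- One undirected token-sliding step along an edge. -/
def UIsStep [DecidableEq V] (G : SimpleGraph V) (I J : Finset V) : Prop :=
  ∃ u v, G.Adj u v ∧ I \ J = {u} ∧ J \ I = {v}

/-- Reconfigurability under (undirected) token sliding. -/
def UReconfigurable [DecidableEq V] (G : SimpleGraph V) (I J : Finset V) : Prop :=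
  ∃ (ℓ : ℕ) (f : Fin (ℓ + 1) → Finset V),
    (∀ i, UIndep G (f i)) ∧ (∀ i : Fin ℓ, UIsStep G (f i.castSucc) (f i.succ)) ∧
    f 0 = I ∧ f (Fin.last ℓ) = J

lemma inC_self (A : V → V → Prop) (a b : V) : InCminus A a b a := SimpleGraph.Reachable.refl a

lemma notInC (A : V → V → Prop) (hT : IsPolytree A) {a b : V} (hab : A a b) :
    ¬ InCminus A a b b := by
  obtain ⟨hloop, hanti, htree⟩ := hT
  have hadj : (underlying A).Adj a b := by
    refine ⟨fun h => hloop a (h ▸ hab), Or.inl hab⟩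
  have hbr := (SimpleGraph.isAcyclic_iff_forall_adj_isBridge.mp htree.IsAcyclic) hadj
  exact hbr

lemma sameSide (A : V → V → Prop) (hT : IsPolytree A) {a b u v : V}
    (hab : A a b) (huv : A u v) (hne : (u, v) ≠ (a, b)) :
    (InCminus A a b u ↔ InCminus A a b v) := by
  obtain ⟨hloop, hanti, htree⟩ := hT
  have hadj : ((underlying A).deleteEdges {s(a, b)}).Adj u v := by
    rw [SimpleGraph.deleteEdges_adj]
    constructor
    · exact ⟨fun h => hloop u (h ▸ huv), Or.inl huv⟩
    · intro h
      simp only [Set.mem_singleton_iff, Sym2.eq, Sym2.rel_iff', Prod.mk.injEq, Prod.swap_prod_mk] at h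
      rcases h with ⟨rfl, rfl⟩ | ⟨rfl, rfl⟩
      · exact hne rfl
      · exact hanti _ _ hab huv
  exact ⟨fun h => h.trans hadj.reachable, fun h => h.trans hadj.symm.reachable⟩

noncomputable def Phi [Fintype V] [DecidableEq V] (A : V → V → Prop) (I : Finset V) : ℤ :=
  ∑ e ∈ Finset.univ.filter (fun e : V × V => A e.1 e.2),
    ((I.filter fun x => InCminus A e.1 e.2 x).card : ℤ)

lemma filter_card_step [DecidableEq V] {I J : Finset V} {u v : V}
    (hIJ : I \ J = {u}) (hJI : J \ I = {v}) (P : V → Prop) [DecidablePred P] :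
    ((I.filter P).card : ℤ) - ((J.filter P).card : ℤ)
      = (if P u then 1 else 0) - (if P v then 1 else 0) := by
  have hI : I = (I ∩ J) ∪ {u} := by
    rw [← hIJ]; ext x
    simp only [Finset.mem_union, Finset.mem_inter, Finset.mem_sdiff]; tauto
  have hJ : J = (I ∩ J) ∪ {v} := by
    rw [← hJI]; ext x
    simp only [Finset.mem_union, Finset.mem_inter, Finset.mem_sdiff]; tauto
  have hu : u ∉ I ∩ J := by
    have : u ∈ I \ J := by rw [hIJ]; exact Finset.mem_singleton_self u
    simp only [Finset.mem_sdiff] at this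
    simp [this.2]
  have hv : v ∉ I ∩ J := by
    have : v ∈ J \ I := by rw [hJI]; exact Finset.mem_singleton_self v
    simp only [Finset.mem_sdiff] at this
    simp [this.2]
  have cI : (I.filter P).card = ((I ∩ J).filter P).card + (if P u then 1 else 0) := by
    conv_lhs => rw [hI]
    rw [Finset.filter_union, Finset.card_union_of_disjoint]
    · congr 1
      simp [Finset.filter_singleton]; split <;> simp
    · refine Finset.disjoint_left.mpr fun x hx hx' => ?_
      simp only [Finset.mem_filter, Finset.mem_singleton] at hx hx'
      exact hu (hx'.1 ▸ hx.1)
  have cJ : (J.filter P).card = ((I ∩ J).filter P).card + (if P v then 1 else 0) := by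
    conv_lhs => rw [hJ]
    rw [Finset.filter_union, Finset.card_union_of_disjoint]
    · congr 1
      simp [Finset.filter_singleton]; split <;> simp
    · refine Finset.disjoint_left.mpr fun x hx hx' => ?_
      simp only [Finset.mem_filter, Finset.mem_singleton] at hx hx'
      exact hv (hx'.1 ▸ hx.1)
  rw [cI, cJ]
  push_cast
  ring

lemma Phi_step [Fintype V] [DecidableEq V] (A : V → V → Prop) (hT : IsPolytree A)
    {I J : Finset V} (h : IsStep A I J) : Phi A I - Phi A J = 1 := by
  obtain ⟨u, v, huv, hIJ, hJI⟩ := h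
  unfold Phi
  rw [← Finset.sum_sub_distrib]
  have hsum : ∀ e ∈ Finset.univ.filter (fun e : V × V => A e.1 e.2),
      (((I.filter fun x => InCminus A e.1 e.2 x).card : ℤ) -
       ((J.filter fun x => InCminus A e.1 e.2 x).card : ℤ))
      = if e = (u, v) then 1 else 0 := by
    rintro ⟨a, b⟩ he
    simp only [Finset.mem_filter] at he
    have hab : A a b := he.2
    rw [filter_card_step hIJ hJI]
    by_cases heq : (a, b) = (u, v)
    · obtain ⟨rfl, rfl⟩ := Prod.mk.injEq .. ▸ heq
      rw [if_pos rfl, if_pos (inC_self A a b), if_neg (notInC A hT hab)]; ring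
    · rw [if_neg heq]
      have := sameSide A hT hab huv (fun h => heq h.symm)
      by_cases hu : InCminus A a b u
      · rw [if_pos hu, if_pos (this.mp hu)]; ring
      · rw [if_neg hu, if_neg (fun h => hu (this.mpr h))]; ring
  rw [Finset.sum_congr rfl hsum]
  rw [Finset.sum_ite_eq']
  simp [huv]

/-- Every reconfiguration sequence from `I⁰` to `Iᵗ` has the same
length, namely `∑_{e ∈ A} w(e; I⁰, Iᵗ)`. -/
theorem stmt_3 [Fintype V] [DecidableEq V] (A : V → V → Prop) (hT : IsPolytree A)
    (I0 It : Finset V) (h0 : IndepF A I0) (ht : IndepF A It) (hcard : I0.card = It.card)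
    {ℓ : ℕ} (f : Fin (ℓ + 1) → Finset V) (hf : IsReconfSeq A f)
    (hstart : f 0 = I0) (hend : f (Fin.last ℓ) = It) :
    (ℓ : ℤ) = ∑ e ∈ Finset.univ.filter (fun e : V × V => A e.1 e.2),
      wArc A I0 It e.1 e.2 := by
  have key : ∀ n : ℕ, ∀ hn : n ≤ ℓ, Phi A (f ⟨0, by omega⟩) - Phi A (f ⟨n, by omega⟩) = n := by
    intro n
    induction n with
    | zero => intro _; simp
    | succ m ih =>
      intro hn
      have hm := ih (by omega)
      have hstep := Phi_step A hT (hf.2 ⟨m, by omega⟩)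
      simp only [Fin.castSucc_mk, Fin.succ_mk] at hstep
      push_cast
      omega
  have h := key ℓ le_rfl
  have h0' : (⟨0, by omega⟩ : Fin (ℓ+1)) = 0 := rfl
  have hl' : (⟨ℓ, by omega⟩ : Fin (ℓ+1)) = Fin.last ℓ := rfl
  simp only [h0', hl', hstart, hend] at h
  rw [← h]
  unfold Phi wArc
  rw [← Finset.sum_sub_distrib]
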